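/- Let X_0, X_1, ..., X_{n-1} be i.i.d. random variables with common pmf p on a countable set X, and let φ: X → [0,∞). Define the multiplicative weight function φ_n(x_0,...,x_{n-1}) = Π_{j=0}^{n-1} φ(x_j). Then the weighted entropy H^w_{φ_n}(f_n) = E[-φ_n(X) log f_n(X)] equals n · H^w_φ(p) · (E[φ(X_0)])^{n-1}, where H^w_φ(p) = -E[φ(X_0) log p(X_0)] and f_n is the product pmf. -/

import Mathlib

open Real Filter

lemma pi_tsum_prod_aux {X : Type*} : ∀ (n : ℕ) (g : Fin n → X → ℝ),
    (∀ j, Summable fun x => |g j x|) →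
    Summable (fun x : Fin n → X => |∏ j, g j (x j)|) ∧
    ∑' x : Fin n → X, ∏ j, g j (x j) = ∏ j, ∑' x, g j x := by
  intro n
  induction n with
  | zero =>
    intro g _
    constructor
    · simpa using (Summable.of_finite (f := fun _ : Fin 0 → X => (1:ℝ)))
    · simp [tsum_const]
  | succ n ih =>
    intro g hg
    obtain ⟨hH, hHt⟩ := ih (fun j => g j.succ) (fun j => hg j.succ)
    set H : (Fin n → X) → ℝ := fun y => ∏ j, g j.succ (y j) with hHdef
    set e := Fin.consEquiv (fun _ : Fin (n+1) => X) with hedef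
    have key : ∀ z : X × (Fin n → X),
        (∏ j, g j (e z j)) = g 0 z.1 * H z.2 := by
      rintro ⟨a, y⟩
      simp [hedef, Fin.prod_univ_succ, H]
    have hn0 : Summable fun x => ‖g 0 x‖ := by simpa [Real.norm_eq_abs] using hg 0
    have hnH : Summable fun y => ‖H y‖ := by simpa [Real.norm_eq_abs] using hH
    have hprod : Summable fun z : X × (Fin n → X) => g 0 z.1 * H z.2 :=
      summable_mul_of_summable_norm hn0 hnH
    have hprodabs : Summable fun z : X × (Fin n → X) => |g 0 z.1 * H z.2| := by
      simpa [Real.norm_eq_abs] using hprod.abs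
    constructor
    · rw [← e.summable_iff]
      refine hprodabs.congr fun z => ?_
      simp [Function.comp, key z]
    · rw [← e.tsum_eq]
      calc ∑' z : X × (Fin n → X), ∏ j, g j (e z j)
          = ∑' z : X × (Fin n → X), g 0 z.1 * H z.2 := tsum_congr key
        _ = (∑' x, g 0 x) * ∑' y, H y := (tsum_mul_tsum_of_summable_norm hn0 hnH).symm
        _ = ∏ j, ∑' x, g j x := by rw [hHt, Fin.prod_univ_succ]

/-- Weighted entropy of an i.i.d. string with a multiplicative weight function:
`H^w_{φ_n}(f_n) = n · H^w_φ(p) · (E[φ])^{n-1}`. -/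
theorem weighted_entropy_iid_multiplicative {X : Type*} [Countable X]
    (p : X → ℝ) (φ : X → ℝ) (n : ℕ)
    (hp0 : ∀ x, 0 ≤ p x) (hp1 : ∑' x, p x = 1)
    (hφ0 : ∀ x, 0 ≤ φ x)
    (hE : Summable (fun x => φ x * p x))
    (hW : Summable (fun x => φ x * p x * Real.log (p x)))
    (hsum : Summable (fun x : Fin n → X =>
      (∏ j, φ (x j)) * (∏ i, p (x i)) * Real.log (∏ i, p (x i)))) :
    -∑' x : Fin n → X,
        (∏ j, φ (x j)) * (∏ i, p (x i)) * Real.log (∏ i, p (x i))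
      = (n : ℝ) * (-∑' x, φ x * p x * Real.log (p x)) * (∑' x, φ x * p x) ^ (n - 1) := by
  set w : X → ℝ := fun y => φ y * p y with hwdef
  set l : X → ℝ := fun y => φ y * p y * Real.log (p y) with hldef
  set T : ℝ := ∑' x, l x with hTdef
  set S : ℝ := ∑' x, w x with hSdef
  have hgabs : ∀ i : Fin n, ∀ j : Fin n,
      Summable fun y => |(fun y => if j = i then l y else w y) y| := by
    intro i j
    split_ifs
    · exact hW.abs
    · exact hE.abs
  have key : ∀ x : Fin n → X,
      (∏ j, φ (x j)) * (∏ i, p (x i)) * Real.log (∏ i, p (x i))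
        = ∑ i : Fin n, ∏ j, (if j = i then l (x j) else w (x j)) := by
    intro x
    by_cases hzero : ∃ i, p (x i) = 0
    · obtain ⟨i0, hi0⟩ := hzero
      have hp : ∏ i, p (x i) = 0 := Finset.prod_eq_zero (Finset.mem_univ i0) hi0
      rw [hp, mul_zero, zero_mul]
      symm
      refine Finset.sum_eq_zero fun i _ => ?_
      refine Finset.prod_eq_zero (Finset.mem_univ i0) ?_
      split_ifs <;> simp [hldef, hwdef, hi0]
    · push_neg at hzero
      rw [Real.log_prod (fun i _ => hzero i), Finset.mul_sum]
      refine Finset.sum_congr rfl fun i _ => ?_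
      have h1 : ∏ j, (if j = i then l (x j) else w (x j))
          = (∏ j, w (x j)) * ∏ j, (if j = i then Real.log (p (x j)) else 1) := by
        rw [← Finset.prod_mul_distrib]
        refine Finset.prod_congr rfl fun j _ => ?_
        split_ifs <;> simp [hldef, hwdef]
      rw [h1, Finset.prod_ite_eq' Finset.univ i (fun j => Real.log (p (x j)))]
      simp only [Finset.mem_univ, if_true]
      rw [← Finset.prod_mul_distrib]
  have aux := fun i : Fin n =>
    pi_tsum_prod_aux n (fun j => fun y => if j = i then l y else w y) (hgabs i)
  have hFsum : ∀ i : Fin n,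
      Summable fun x : Fin n → X => ∏ j, (if j = i then l (x j) else w (x j)) :=
    fun i => summable_abs_iff.mp (aux i).1
  have hFtsum : ∀ i : Fin n,
      (∑' x : Fin n → X, ∏ j, (if j = i then l (x j) else w (x j))) = T * S ^ (n - 1) := by
    intro i
    rw [(aux i).2]
    have h2 : ∀ j : Fin n, (∑' y, (if j = i then l y else w y)) = if j = i then T else S := by
      intro j; split_ifs <;> rfl
    rw [Finset.prod_congr rfl fun j _ => h2 j]
    rw [← Finset.mul_prod_erase Finset.univ _ (Finset.mem_univ i), if_pos rfl]
    congr 1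
    rw [Finset.prod_congr rfl fun j hj => if_neg (Finset.ne_of_mem_erase hj),
      Finset.prod_const, Finset.card_erase_of_mem (Finset.mem_univ i), Finset.card_univ,
      Fintype.card_fin]
  rw [tsum_congr key, Summable.tsum_finsetSum fun i _ => hFsum i,
    Finset.sum_congr rfl fun i _ => hFtsum i, Finset.sum_const, Finset.card_univ,
    Fintype.card_fin]
  push_cast
  ring
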